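/- If σ and t are real numbers with 0 < σ < 1/2 such that η(σ + it) = 0, then the double partial sums S_N = ∑_{1 ≤ k < k' ≤ N} (-1)^{k+k'} · cos(t·log(k/k')) / (k^σ · k'^σ) tend to -∞ as N → ∞. -/

import Mathlib

open Filter Finset Complex

noncomputable def etaTerm (σ t : ℝ) (n : ℕ) : ℂ :=
  (-1 : ℂ) ^ (n - 1) / (n : ℂ) ^ ((σ : ℂ) + (t : ℂ) * Complex.I)

noncomputable def gfun (σ t : ℝ) (p : ℕ × ℕ) : ℝ :=
  (-1 : ℝ) ^ (p.1 + p.2) * Real.cos (t * Real.log ((p.1 : ℝ) / (p.2 : ℝ))) /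
    ((p.1 : ℝ) ^ σ * (p.2 : ℝ) ^ σ)

lemma etaTerm_eq (σ t : ℝ) {k : ℕ} (hk : 1 ≤ k) :
    etaTerm σ t k = (-1 : ℂ) ^ (k - 1) *
      Complex.exp (-((Real.log k : ℂ) * ((σ : ℂ) + (t : ℂ) * Complex.I))) := by
  have hk0 : (k : ℂ) ≠ 0 := Nat.cast_ne_zero.mpr (by omega)
  rw [etaTerm, Complex.cpow_def_of_ne_zero hk0, div_eq_mul_inv, ← Complex.exp_neg,
    Complex.natCast_log]

lemma term_re (σ t : ℝ) {k j : ℕ} (hk : 1 ≤ k) (hj : 1 ≤ j) :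
    (etaTerm σ t k * (starRingEnd ℂ) (etaTerm σ t j)).re = gfun σ t (k, j) := by
  set L := Real.log k with hL
  set M := Real.log j with hM
  rw [etaTerm_eq σ t hk, etaTerm_eq σ t hj]
  rw [map_mul, ← Complex.exp_conj, map_pow, map_neg, map_one]
  rw [mul_mul_mul_comm, ← Complex.exp_add, ← pow_add]
  have hpow : ((-1 : ℂ)) ^ (k - 1 + (j - 1)) = (((-1 : ℝ) ^ (k + j) : ℝ) : ℂ) := by
    have : k - 1 + (j - 1) + 2 = k + j := by omega
    push_cast
    rw [← this, pow_add]
    ring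
  rw [hpow]
  have harg : -((L : ℂ) * ((σ : ℂ) + (t : ℂ) * Complex.I)) +
      (starRingEnd ℂ) (-((M : ℂ) * ((σ : ℂ) + (t : ℂ) * Complex.I)))
      = Complex.mk (-((L + M) * σ)) (-((L - M) * t)) := by
    apply Complex.ext <;> simp <;> ring
  rw [harg, Complex.re_ofReal_mul, Complex.exp_re]
  have hre : (Complex.mk (-((L + M) * σ)) (-((L - M) * t))).re = -((L + M) * σ) := rfl
  have him : (Complex.mk (-((L + M) * σ)) (-((L - M) * t))).im = -((L - M) * t) := rfl
  rw [hre, him, Real.cos_neg]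
  have hk0 : (0:ℝ) < (k:ℝ) := by exact_mod_cast Nat.pos_of_ne_zero (by omega)
  have hj0 : (0:ℝ) < (j:ℝ) := by exact_mod_cast Nat.pos_of_ne_zero (by omega)
  have hlog : Real.log ((k:ℝ)/(j:ℝ)) = L - M := Real.log_div (ne_of_gt hk0) (ne_of_gt hj0)
  have hrp : (k:ℝ)^σ * (j:ℝ)^σ = Real.exp ((L + M) * σ) := by
    rw [Real.rpow_def_of_pos hk0, Real.rpow_def_of_pos hj0, ← Real.exp_add]
    rw [hL, hM]
    ring_nf
  rw [gfun]
  simp only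
  rw [hlog, hrp, Real.exp_neg, mul_comm t (L - M)]
  ring

lemma gfun_symm (σ t : ℝ) {k j : ℕ} (hk : 1 ≤ k) (hj : 1 ≤ j) :
    gfun σ t (j, k) = gfun σ t (k, j) := by
  have hk0' : ((k:ℝ)) ≠ 0 := Nat.cast_ne_zero.mpr (by omega)
  have hj0' : ((j:ℝ)) ≠ 0 := Nat.cast_ne_zero.mpr (by omega)
  have : Real.log ((j:ℝ)/(k:ℝ)) = -Real.log ((k:ℝ)/(j:ℝ)) := by
    rw [Real.log_div hj0' hk0', Real.log_div hk0' hj0']; ring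
  simp [gfun, this, mul_neg, Real.cos_neg, add_comm j k, mul_comm ((j:ℝ)^σ)]

lemma gfun_diag (σ t : ℝ) {k : ℕ} (hk : 1 ≤ k) :
    gfun σ t (k, k) = 1 / ((k:ℝ)^σ * (k:ℝ)^σ) := by
  have hk0 : (0:ℝ) < (k:ℝ) := by exact_mod_cast hk
  simp [gfun, div_self (ne_of_gt hk0), ← mul_pow]

lemma normSq_expand (σ t : ℝ) (N : ℕ) :
    ‖∑ n ∈ Finset.Icc 1 N, etaTerm σ t n‖ ^ 2
      = ∑ p ∈ Finset.Icc 1 N ×ˢ Finset.Icc 1 N, gfun σ t p := by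
  have h1 : ‖∑ n ∈ Finset.Icc 1 N, etaTerm σ t n‖ ^ 2
      = ((∑ n ∈ Finset.Icc 1 N, etaTerm σ t n) *
          (starRingEnd ℂ) (∑ n ∈ Finset.Icc 1 N, etaTerm σ t n)).re := by
    rw [Complex.mul_conj, Complex.ofReal_re, ← Complex.sq_norm]
  rw [h1, map_sum, Finset.sum_mul_sum, Complex.re_sum, Finset.sum_product]
  refine Finset.sum_congr rfl fun k hk => ?_
  rw [Complex.re_sum]
  refine Finset.sum_congr rfl fun j hj => ?_
  exact term_re σ t (Finset.mem_Icc.mp hk).1 (Finset.mem_Icc.mp hj).1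

lemma split_sum (σ t : ℝ) (N : ℕ) :
    ∑ p ∈ Finset.Icc 1 N ×ˢ Finset.Icc 1 N, gfun σ t p
      = (∑ k ∈ Finset.Icc 1 N, 1 / ((k:ℝ)^σ * (k:ℝ)^σ))
        + 2 * ∑ p ∈ (Finset.Icc 1 N ×ˢ Finset.Icc 1 N).filter (fun p => p.1 < p.2),
            gfun σ t p := by
  set P := Finset.Icc 1 N ×ˢ Finset.Icc 1 N with hP
  rw [← Finset.sum_filter_add_sum_filter_not P (fun p => p.1 < p.2) (gfun σ t)]
  have hsplit2 : ∑ p ∈ P.filter (fun p => ¬ p.1 < p.2), gfun σ t p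
      = (∑ p ∈ P.filter (fun p => p.1 = p.2), gfun σ t p)
        + ∑ p ∈ P.filter (fun p => p.2 < p.1), gfun σ t p := by
    rw [← Finset.sum_filter_add_sum_filter_not (P.filter (fun p => ¬ p.1 < p.2))
      (fun p => p.1 = p.2) (gfun σ t), Finset.filter_filter, Finset.filter_filter]
    congr 1
    · apply Finset.sum_congr _ fun _ _ => rfl
      apply Finset.filter_congr
      intro p _
      constructor
      · rintro ⟨_, h⟩; exact h
      · intro h; omega
    · apply Finset.sum_congr _ fun _ _ => rfl
      apply Finset.filter_congr
      intro p _
      constructor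
      · rintro ⟨h1, h2⟩; omega
      · intro h; omega
  have hdiag : ∑ p ∈ P.filter (fun p => p.1 = p.2), gfun σ t p
      = ∑ k ∈ Finset.Icc 1 N, 1 / ((k:ℝ)^σ * (k:ℝ)^σ) := by
    refine Finset.sum_nbij' Prod.fst (fun k => (k, k)) ?_ ?_ ?_ ?_ ?_
    · intro p hp
      simp only [Finset.mem_filter, hP, Finset.mem_product] at hp
      exact hp.1.1
    · intro k hk
      rw [Finset.mem_filter]
      exact ⟨Finset.mem_product.mpr ⟨hk, hk⟩, rfl⟩
    · intro p hp
      rw [Finset.mem_filter] at hp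
      exact Prod.ext rfl hp.2
    · intro k _; rfl
    · intro p hp
      simp only [Finset.mem_filter, hP, Finset.mem_product, Finset.mem_Icc] at hp
      obtain ⟨⟨⟨h1, _⟩, _⟩, heq⟩ := hp
      rw [show p = (p.1, p.1) from Prod.ext rfl heq.symm, gfun_diag σ t h1]
  have hswap : ∑ p ∈ P.filter (fun p => p.2 < p.1), gfun σ t p
      = ∑ p ∈ P.filter (fun p => p.1 < p.2), gfun σ t p := by
    refine Finset.sum_nbij' Prod.swap Prod.swap ?_ ?_ ?_ ?_ ?_
    · intro p hp
      simp only [Finset.mem_filter, hP, Finset.mem_product] at hp ⊢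
      exact ⟨⟨hp.1.2, hp.1.1⟩, hp.2⟩
    · intro p hp
      simp only [Finset.mem_filter, hP, Finset.mem_product] at hp ⊢
      exact ⟨⟨hp.1.2, hp.1.1⟩, hp.2⟩
    · intro p _; rfl
    · intro p _; rfl
    · intro p hp
      simp only [Finset.mem_filter, hP, Finset.mem_product, Finset.mem_Icc] at hp
      obtain ⟨⟨⟨h1, _⟩, ⟨h2, _⟩⟩, _⟩ := hp
      exact gfun_symm σ t h2 h1
  rw [hsplit2, hdiag, hswap]
  ring

theorem double_sum_tendsto_atBot_of_eta_zero_left (σ t : ℝ) (h0 : 0 < σ) (h1 : σ < 1 / 2)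
    (heta : Tendsto (fun N : ℕ => ∑ n ∈ Finset.Icc 1 N,
        (-1 : ℂ) ^ (n - 1) / (n : ℂ) ^ ((σ : ℂ) + (t : ℂ) * Complex.I))
      atTop (nhds 0)) :
    Tendsto (fun N : ℕ => ∑ p ∈ (Finset.Icc 1 N ×ˢ Finset.Icc 1 N).filter (fun p => p.1 < p.2),
        (-1 : ℝ) ^ (p.1 + p.2) * Real.cos (t * Real.log ((p.1 : ℝ) / (p.2 : ℝ))) /
          ((p.1 : ℝ) ^ σ * (p.2 : ℝ) ^ σ))
      atTop atBot := by
  set h : ℕ → ℝ := fun k => 1 / ((k:ℝ)^σ * (k:ℝ)^σ) with hh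
  set F : ℕ → ℝ := fun N => ‖∑ n ∈ Finset.Icc 1 N, etaTerm σ t n‖ ^ 2 with hF
  set D : ℕ → ℝ := fun N => ∑ k ∈ Finset.Icc 1 N, h k with hD
  set S : ℕ → ℝ := fun N => ∑ p ∈ (Finset.Icc 1 N ×ˢ Finset.Icc 1 N).filter
      (fun p => p.1 < p.2), gfun σ t p with hS
  -- F → 0
  have hF0 : Tendsto F atTop (nhds 0) := by
    have := (heta.norm).pow 2
    simpa [hF, etaTerm] using this
  -- D → ∞
  have hDtop : Tendsto D atTop atTop := by
    have hnonneg : ∀ n, 0 ≤ h n := fun n => by positivity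
    have heq : h = fun n : ℕ => 1 / (n:ℝ) ^ (2 * σ) := by
      funext n
      rcases Nat.eq_zero_or_pos n with rfl | hn
      · simp [hh, Real.zero_rpow (ne_of_gt h0), Real.zero_rpow (by positivity : 2 * σ ≠ 0)]
      · have hn0 : (0:ℝ) < (n:ℝ) := by exact_mod_cast hn
        rw [hh]
        simp only
        rw [two_mul, Real.rpow_add hn0]
    have hnotsum : ¬ Summable h := by
      rw [heq]
      rw [Real.summable_one_div_nat_rpow]
      intro hcon
      linarith
    have hrange : Tendsto (fun n : ℕ => ∑ i ∈ Finset.range n, h i) atTop atTop :=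
      (not_summable_iff_tendsto_nat_atTop_of_nonneg hnonneg).mp hnotsum
    have hDrange : ∀ N, D N = ∑ i ∈ Finset.range (N + 1), h i := by
      intro N
      have hz : h 0 = 0 := by
        simp [hh, Real.zero_rpow (ne_of_gt h0)]
      rw [hD]
      simp only
      rw [← Finset.Ico_add_one_right_eq_Icc, Finset.range_eq_Ico,
        Finset.sum_eq_sum_Ico_succ_bot (Nat.succ_pos N), hz, zero_add]
      rfl
    have : Tendsto (fun N : ℕ => ∑ i ∈ Finset.range (N + 1), h i) atTop atTop :=
      hrange.comp (tendsto_add_atTop_nat 1)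
    exact this.congr fun N => (hDrange N).symm
  -- S N = (F N - D N) / 2
  have hSeq : ∀ N, S N = (F N - D N) / 2 := by
    intro N
    have := normSq_expand σ t N
    rw [split_sum σ t N] at this
    rw [hS, hF, hD]
    simp only
    rw [this]
    ring
  have : Tendsto (fun N => (F N - D N) / 2) atTop atBot := by
    have h2 : Tendsto (fun N => F N - D N) atTop atBot := by
      have := hF0.add_atBot (tendsto_neg_atTop_atBot.comp hDtop)
      simpa [sub_eq_add_neg] using this
    exact h2.atBot_div_const (by norm_num)
  refine (this.congr fun N => (hSeq N).symm).congr fun N => ?_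
  rfl
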